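/- Suppose k and ℓ are lines in ℍ^n and the angle between them is π/3. Then there is a unique line m contained in the two-dimensional ℍ-subspace spanned by k and ℓ that is at angle π/3 to both k and ℓ. -/

import Mathlib

noncomputable section

local notation "ℍ" => Quaternion ℝ

/-- The standard Hermitian form on `ℍⁿ`, conjugate-linear in the first variable and
ℍ-linear in the second: `⟨x,y⟩ = ∑ i, star (x i) * y i`. -/
def qInner {n : ℕ} (x y : Fin n → ℍ) : ℍ := ∑ i, star (x i) * y i

/-- The norm `|v| = √⟨v,v⟩` on `ℍⁿ`. -/
def qNorm {n : ℕ} (v : Fin n → ℍ) : ℝ := Real.sqrt (qInner v v).re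

/-- The ℍ-line `vℍ` spanned by `v` (the set of right scalar multiples of `v`). -/
def lineOf {n : ℕ} (v : Fin n → ℍ) : Set (Fin n → ℍ) := {w | ∃ c : ℍ, w = fun i => v i * c}

/-- `ℓ` and `ℓ'` are at angle `θ ∈ [0, π/2]`: for all nonzero `v ∈ ℓ`, `w ∈ ℓ'`,
`|⟨v,w⟩| = cos θ · |v|·|w|`. -/
def atAngle {n : ℕ} (ℓ ℓ' : Set (Fin n → ℍ)) (θ : ℝ) : Prop :=
  ∀ v ∈ ℓ, ∀ w ∈ ℓ', v ≠ 0 → w ≠ 0 → ‖qInner v w‖ = Real.cos θ * (qNorm v * qNorm w)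

/-- The two-dimensional right ℍ-subspace spanned by `v` and `w`, as a set. -/
def planeOf {n : ℕ} (v w : Fin n → ℍ) : Set (Fin n → ℍ) :=
  {x | ∃ c d : ℍ, x = (fun i => v i * c) + fun i => w i * d}

namespace QAux


lemma norm_sq_q (a : ℍ) : ‖a‖ ^ 2 = (a * star a).re := by
  rw [← Quaternion.normSq_def, Quaternion.normSq_eq_norm_mul_self]; ring

lemma star_mul_self' (a : ℍ) : star a * a = ((‖a‖ ^ 2 : ℝ) : ℍ) := by
  rw [Quaternion.star_mul_self, Quaternion.normSq_eq_norm_mul_self]; norm_cast; ring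

lemma mul_star_self' (a : ℍ) : a * star a = ((‖a‖ ^ 2 : ℝ) : ℍ) := by
  rw [Quaternion.self_mul_star, Quaternion.normSq_eq_norm_mul_self]; norm_cast; ring

lemma coe_mul_re (r : ℝ) (a : ℍ) : ((r : ℍ) * a).re = r * a.re := by
  rw [Quaternion.coe_mul_eq_smul]; simp

lemma re_eq_neg_norm {z : ℍ} (hz : z.re = -‖z‖) : z = ((z.re : ℝ) : ℍ) := by
  have h1 : ‖z‖ ^ 2 = z.re ^ 2 + z.imI ^ 2 + z.imJ ^ 2 + z.imK ^ 2 := by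
    rw [← Quaternion.normSq_def', Quaternion.normSq_eq_norm_mul_self]; ring
  have h2 : z.re ^ 2 = ‖z‖ ^ 2 := by rw [hz]; ring
  have hI : z.imI = 0 := by nlinarith [sq_nonneg z.imI, sq_nonneg z.imJ, sq_nonneg z.imK]
  have hJ : z.imJ = 0 := by nlinarith [sq_nonneg z.imI, sq_nonneg z.imJ, sq_nonneg z.imK]
  have hK : z.imK = 0 := by nlinarith [sq_nonneg z.imI, sq_nonneg z.imJ, sq_nonneg z.imK]
  ext <;> simp [hI, hJ, hK]

lemma norm_add_sq_q (x y : ℍ) :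
    ‖x + y‖ ^ 2 = ‖x‖ ^ 2 + ‖y‖ ^ 2 + 2 * (x * star y).re := by
  have key : (y * star x).re = (x * star y).re := by
    have : y * star x = star (x * star y) := by rw [star_mul, star_star]
    rw [this, Quaternion.re_star]
  rw [norm_sq_q, norm_sq_q, norm_sq_q, star_add, mul_add, add_mul, add_mul]
  simp only [Quaternion.re_add, key]
  ring

variable {n : ℕ}

lemma qInner_mul_right (v w : Fin n → ℍ) (c : ℍ) :
    qInner v (fun i => w i * c) = qInner v w * c := by
  simp [qInner, Finset.sum_mul, mul_assoc]

lemma qInner_mul_left (v w : Fin n → ℍ) (c : ℍ) :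
    qInner (fun i => v i * c) w = star c * qInner v w := by
  simp [qInner, Finset.mul_sum, star_mul, mul_assoc]

lemma qInner_add_left (x y w : Fin n → ℍ) :
    qInner (x + y) w = qInner x w + qInner y w := by
  simp [qInner, Pi.add_apply, add_mul, Finset.sum_add_distrib]

lemma qInner_add_right (v x y : Fin n → ℍ) :
    qInner v (x + y) = qInner v x + qInner v y := by
  simp [qInner, Pi.add_apply, mul_add, Finset.sum_add_distrib]

lemma coe_middle (r : ℝ) (a b : ℍ) : a * (((r : ℝ) : ℍ) * b) = ((r : ℝ) : ℍ) * (a * b) := by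
  rw [Quaternion.coe_mul_eq_smul, Quaternion.coe_mul_eq_smul, mul_smul_comm]

lemma star_qInner (v w : Fin n → ℍ) : star (qInner v w) = qInner w v := by
  simp [qInner, star_sum, star_mul]

lemma qInner_smul_smul (u w : Fin n → ℍ) (c d : ℍ) :
    qInner (fun i => u i * c) (fun i => w i * d) = star c * qInner u w * d := by
  rw [qInner_mul_left, qInner_mul_right, mul_assoc]

lemma qInner_self_eq (v : Fin n → ℍ) :
    qInner v v = ((∑ i, ‖v i‖ ^ 2 : ℝ) : ℍ) := by
  rw [qInner]
  rw [Finset.sum_congr rfl fun i _ => star_mul_self' (v i)]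
  induction (Finset.univ : Finset (Fin n)) using Finset.induction with
  | empty => simp
  | insert _ _ h ih => rw [Finset.sum_insert h, Finset.sum_insert h, ih, Quaternion.coe_add]

lemma qInner_self_re (v : Fin n → ℍ) : (qInner v v).re = ∑ i, ‖v i‖ ^ 2 := by
  rw [qInner_self_eq, Quaternion.re_coe]

lemma qInner_self_re_nonneg (v : Fin n → ℍ) : 0 ≤ (qInner v v).re := by
  rw [qInner_self_re]
  exact Finset.sum_nonneg fun i _ => sq_nonneg _

lemma qInner_self_re_pos {v : Fin n → ℍ} (hv : v ≠ 0) : 0 < (qInner v v).re := by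
  rw [qInner_self_re]
  obtain ⟨i, hi⟩ := Function.ne_iff.mp hv
  exact Finset.sum_pos' (fun j _ => sq_nonneg _)
    ⟨i, Finset.mem_univ i, pow_pos (norm_pos_iff.mpr hi) 2⟩

lemma qInner_self (v : Fin n → ℍ) : qInner v v = (((qInner v v).re : ℝ) : ℍ) :=
  Quaternion.star_eq_self.mp (star_qInner v v)

lemma qNorm_sq (v : Fin n → ℍ) : qNorm v ^ 2 = (qInner v v).re :=
  Real.sq_sqrt (qInner_self_re_nonneg v)

lemma qNorm_smul (u : Fin n → ℍ) (c : ℍ) :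
    qNorm (fun i => u i * c) = qNorm u * ‖c‖ := by
  unfold qNorm
  rw [qInner_smul_smul, qInner_self u]
  have : star c * (((qInner u u).re : ℝ) : ℍ) * c
      = (((qInner u u).re * ‖c‖ ^ 2 : ℝ) : ℍ) := by
    rw [← Quaternion.coe_commutes, mul_assoc, star_mul_self', ← Quaternion.coe_mul]
  rw [this]
  simp only [Quaternion.re_coe]
  rw [Real.sqrt_mul (qInner_self_re_nonneg u), Real.sqrt_sq (norm_nonneg c)]

end QAux


open QAux

set_option maxHeartbeats 1000000 in
/-- If lines `k = vℍ` and `ℓ = wℍ` in `ℍⁿ` are at angle `π/3`, then there is a unique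
line `m` contained in the two-dimensional ℍ-subspace spanned by `k` and `ℓ` that is at
angle `π/3` to both `k` and `ℓ`. -/
theorem unique_third_line_of_star (n : ℕ) (v w : Fin n → ℍ) (hv : v ≠ 0) (hw : w ≠ 0)
    (h : atAngle (lineOf v) (lineOf w) (Real.pi / 3)) :
    ∃! m : Set (Fin n → ℍ),
      (∃ u : Fin n → ℍ, u ≠ 0 ∧ m = lineOf u) ∧ m ⊆ planeOf v w ∧
      atAngle m (lineOf v) (Real.pi / 3) ∧ atAngle m (lineOf w) (Real.pi / 3) := by
  classical
  set A := (qInner v v).re with hAdef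
  set B := (qInner w w).re with hBdef
  have hA0 : 0 < A := qInner_self_re_pos hv
  have hB0 : 0 < B := qInner_self_re_pos hw
  set p := qInner v w with hpdef
  have hvv : qInner v v = ((A : ℝ) : ℍ) := qInner_self v
  have hww : qInner w w = ((B : ℝ) : ℍ) := qInner_self w
  have hwv : qInner w v = star p := (star_qInner v w).symm
  have humem : ∀ x : Fin n → ℍ, x ∈ lineOf x := fun x => ⟨1, by funext i; rw [mul_one]⟩
  have hqv : qNorm v = Real.sqrt A := rfl
  have hqw : qNorm w = Real.sqrt B := rfl
  have hAA : Real.sqrt A * Real.sqrt A = A := Real.mul_self_sqrt hA0.le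
  have hBB : Real.sqrt B * Real.sqrt B = B := Real.mul_self_sqrt hB0.le
  have hp : ‖p‖ = 1 / 2 * (Real.sqrt A * Real.sqrt B) := by
    have := h v (humem v) w (humem w) hv hw
    rwa [Real.cos_pi_div_three, hqv, hqw] at this
  have hp2 : ‖p‖ ^ 2 = A * B / 4 := by
    rw [hp, mul_pow, mul_pow, Real.sq_sqrt hA0.le, Real.sq_sqrt hB0.le]; ring
  have hps : p * star p = ((A * B / 4 : ℝ) : ℍ) := by
    rw [mul_star_self', hp2]
  have hsp : star p * p = ((A * B / 4 : ℝ) : ℍ) := by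
    rw [star_mul_self', hp2]
  have hpne : p ≠ 0 := by
    intro h0
    rw [h0, norm_zero] at hp
    have : 0 < Real.sqrt A * Real.sqrt B := by positivity
    nlinarith
  set d₀ : ℍ := -((2 / B) • star p) with hd0
  set u : Fin n → ℍ := v + fun i => w i * d₀ with hu
  have hstard0 : star d₀ = -((2 / B) • p) := by
    rw [hd0, star_neg, ← Quaternion.coe_mul_eq_smul, star_mul, Quaternion.star_coe, star_star,
      ← Quaternion.coe_commutes, Quaternion.coe_mul_eq_smul]
  have k1 : star d₀ * star p = ((-(A / 2) : ℝ) : ℍ) := by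
    rw [hstard0, neg_mul, smul_mul_assoc, hps, Quaternion.smul_coe, ← Quaternion.coe_neg]
    congr 1; field_simp; ring
  have k2 : p * d₀ = ((-(A / 2) : ℝ) : ℍ) := by
    rw [hd0, mul_neg, mul_smul_comm, hps, Quaternion.smul_coe, ← Quaternion.coe_neg]
    congr 1; field_simp; ring
  have hnd0 : ‖d₀‖ ^ 2 = A / B := by
    rw [hd0, norm_neg, norm_smul, mul_pow, norm_star, hp2, Real.norm_eq_abs, sq_abs]
    field_simp; ring
  have k3 : star d₀ * ((B : ℝ) : ℍ) * d₀ = ((A : ℝ) : ℍ) := by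
    rw [← Quaternion.coe_commutes, mul_assoc, star_mul_self', hnd0, ← Quaternion.coe_mul]
    congr 1; field_simp
  have huv : qInner u v = ((A / 2 : ℝ) : ℍ) := by
    rw [hu, qInner_add_left, qInner_mul_left, hvv, hwv, k1, ← Quaternion.coe_add]
    congr 1; ring
  have huw : qInner u w = -p := by
    rw [hu, qInner_add_left, qInner_mul_left, hww, ← hpdef, hstard0, neg_mul, smul_mul_assoc,
      Quaternion.mul_coe_eq_smul, smul_smul]
    have : 2 / B * B = 2 := by field_simp
    rw [this, two_smul]
    abel
  have huu : qInner u u = ((A : ℝ) : ℍ) := by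
    rw [hu, qInner_add_left, qInner_add_right, qInner_add_right, qInner_mul_right,
      qInner_mul_left, qInner_mul_left, qInner_mul_right, hvv, hww, ← hpdef, hwv, k2, k1, ← mul_assoc, k3]
    rw [← Quaternion.coe_add, ← Quaternion.coe_add, ← Quaternion.coe_add]
    congr 1; ring
  have hqnu : qNorm u = Real.sqrt A := by
    unfold qNorm
    rw [huu, Quaternion.re_coe]
  have hu0 : u ≠ 0 := by
    intro h0
    rw [h0] at huu
    have h00 : qInner (0 : Fin n → ℍ) 0 = 0 := by simp [qInner]
    rw [h00] at huu
    have : A = 0 := by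
      have := congrArg QuaternionAlgebra.re huu
      simpa [Quaternion.re_zero] using this.symm
    linarith
  refine ⟨lineOf u, ⟨⟨u, hu0, rfl⟩, ?_, ?_, ?_⟩, ?_⟩
  · rintro x ⟨c, rfl⟩
    exact ⟨c, d₀ * c, by funext i; simp [hu, Pi.add_apply, add_mul, mul_assoc]⟩
  · rintro x ⟨c, rfl⟩ y ⟨c', rfl⟩ hx hy
    rw [qInner_smul_smul, huv, qNorm_smul, qNorm_smul, hqnu, hqv, Real.cos_pi_div_three,
      norm_mul, norm_mul, norm_star, Quaternion.norm_coe, Real.norm_eq_abs,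
      abs_of_pos (by linarith : (0:ℝ) < A / 2)]
    linear_combination (-(‖c‖ * ‖c'‖ / 2)) * hAA
  · rintro x ⟨c, rfl⟩ y ⟨c', rfl⟩ hx hy
    rw [qInner_smul_smul, huw, qNorm_smul, qNorm_smul, hqnu, hqw, Real.cos_pi_div_three,
      norm_mul, norm_mul, norm_neg, norm_star, hp]
    ring
  · rintro m ⟨⟨u', hu'0, rfl⟩, hsub, hm1, hm2⟩
    obtain ⟨c, d, hcd⟩ := hsub (humem u')
    set z := star c * p * d with hz
    have hqnu'sq : qNorm u' ^ 2 = (qInner u' u').re := qNorm_sq u'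
    have e1 : star c * ((A : ℝ) : ℍ) * c = ((A * ‖c‖ ^ 2 : ℝ) : ℍ) := by
      rw [Quaternion.mul_coe_eq_smul, smul_mul_assoc, star_mul_self', Quaternion.smul_coe]
    have e1' : star d * ((B : ℝ) : ℍ) * d = ((B * ‖d‖ ^ 2 : ℝ) : ℍ) := by
      rw [Quaternion.mul_coe_eq_smul, smul_mul_assoc, star_mul_self', Quaternion.smul_coe]
    have e2 : star d * star p * c = star z := by
      rw [hz, star_mul, star_mul, star_star, mul_assoc]
    have hin_self : (qInner u' u').re = A * ‖c‖ ^ 2 + B * ‖d‖ ^ 2 + 2 * z.re := by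
      rw [hcd, qInner_add_left, qInner_add_right, qInner_add_right, qInner_smul_smul,
        qInner_smul_smul, qInner_smul_smul, qInner_smul_smul, hvv, hww, ← hpdef, hwv,
        e1, e1', e2, ← hz]
      simp only [Quaternion.re_add, Quaternion.re_coe, Quaternion.re_star]
      ring
    have hin_v : qInner u' v = star c * ((A : ℝ) : ℍ) + star d * star p := by
      rw [hcd, qInner_add_left, qInner_mul_left, qInner_mul_left, hvv, hwv]
    have hin_w : qInner u' w = star c * p + star d * ((B : ℝ) : ℍ) := by
      rw [hcd, qInner_add_left, qInner_mul_left, qInner_mul_left, hww, ← hpdef]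
    have h1 := hm1 u' (humem u') v (humem v) hu'0 hv
    have h2 := hm2 u' (humem u') w (humem w) hu'0 hw
    rw [Real.cos_pi_div_three, hqv] at h1
    rw [Real.cos_pi_div_three, hqw] at h2
    -- squared norm equations
    have c1 : ((star c * ((A : ℝ) : ℍ)) * star (star d * star p)).re = A * z.re := by
      rw [star_mul, star_star, star_star, Quaternion.mul_coe_eq_smul, smul_mul_assoc,
        Quaternion.re_smul, smul_eq_mul, ← mul_assoc, ← hz]
    have c2 : ((star c * p) * star (star d * ((B : ℝ) : ℍ))).re = B * z.re := by
      rw [star_mul, Quaternion.star_coe, star_star, coe_middle, Quaternion.coe_mul_eq_smul,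
        Quaternion.re_smul, smul_eq_mul, hz]
    have E1 : ‖c‖ ^ 2 * A ^ 2 + ‖d‖ ^ 2 * (A * B / 4) + 2 * (A * z.re)
        = 1 / 4 * ((A * ‖c‖ ^ 2 + B * ‖d‖ ^ 2 + 2 * z.re) * A) := by
      have hsq : ‖qInner u' v‖ ^ 2 = (1 / 2 * (qNorm u' * Real.sqrt A)) ^ 2 := by rw [h1]
      rw [hin_v, norm_add_sq_q, c1] at hsq
      simp only [norm_mul, norm_star, Quaternion.norm_coe, Real.norm_eq_abs] at hsq
      rw [abs_of_pos hA0] at hsq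
      calc ‖c‖ ^ 2 * A ^ 2 + ‖d‖ ^ 2 * (A * B / 4) + 2 * (A * z.re)
          = (‖c‖ * A) ^ 2 + (‖d‖ * ‖p‖) ^ 2 + 2 * (A * z.re) := by rw [mul_pow, mul_pow, hp2]; try ring
        _ = (1 / 2 * (qNorm u' * Real.sqrt A)) ^ 2 := hsq
        _ = 1 / 4 * ((A * ‖c‖ ^ 2 + B * ‖d‖ ^ 2 + 2 * z.re) * A) := by
            rw [mul_pow, mul_pow, hqnu'sq, hin_self, Real.sq_sqrt hA0.le]; ring
    have E2 : ‖c‖ ^ 2 * (A * B / 4) + ‖d‖ ^ 2 * B ^ 2 + 2 * (B * z.re)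
        = 1 / 4 * ((A * ‖c‖ ^ 2 + B * ‖d‖ ^ 2 + 2 * z.re) * B) := by
      have hsq : ‖qInner u' w‖ ^ 2 = (1 / 2 * (qNorm u' * Real.sqrt B)) ^ 2 := by rw [h2]
      rw [hin_w, norm_add_sq_q, c2] at hsq
      simp only [norm_mul, norm_star, Quaternion.norm_coe, Real.norm_eq_abs] at hsq
      rw [abs_of_pos hB0] at hsq
      calc ‖c‖ ^ 2 * (A * B / 4) + ‖d‖ ^ 2 * B ^ 2 + 2 * (B * z.re)
          = (‖c‖ * ‖p‖) ^ 2 + (‖d‖ * B) ^ 2 + 2 * (B * z.re) := by rw [mul_pow, mul_pow, hp2]; try ring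
        _ = (1 / 2 * (qNorm u' * Real.sqrt B)) ^ 2 := hsq
        _ = 1 / 4 * ((A * ‖c‖ ^ 2 + B * ‖d‖ ^ 2 + 2 * z.re) * B) := by
            rw [mul_pow, mul_pow, hqnu'sq, hin_self, Real.sq_sqrt hB0.le]; ring
    have F1 : A * ‖c‖ ^ 2 + 2 * z.re = 0 := by
      have hmul : A * (A * ‖c‖ ^ 2 + 2 * z.re) = 0 := by linear_combination 4 / 3 * E1
      rcases mul_eq_zero.mp hmul with h' | h'
      · exact absurd h' hA0.ne'
      · exact h'
    have F2 : B * ‖d‖ ^ 2 + 2 * z.re = 0 := by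
      have hmul : B * (B * ‖d‖ ^ 2 + 2 * z.re) = 0 := by linear_combination 4 / 3 * E2
      rcases mul_eq_zero.mp hmul with h' | h'
      · exact absurd h' hB0.ne'
      · exact h'
    have hc0 : c ≠ 0 := by
      intro h0
      have hz0 : z = 0 := by rw [hz, h0]; simp
      have hd00 : d = 0 := by
        have hF := F2
        rw [hz0] at hF
        simp [Quaternion.re_zero] at hF
        rcases hF with h' | h'
        · exact absurd h' hB0.ne'
        · exact h'
      apply hu'0
      rw [hcd, h0, hd00]
      funext i; simp
    have hzre : z.re = -(A * ‖c‖ ^ 2 / 2) := by linarith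
    have hkey : Real.sqrt A * ‖c‖ = Real.sqrt B * ‖d‖ := by
      have hsq : (Real.sqrt A * ‖c‖) ^ 2 = (Real.sqrt B * ‖d‖) ^ 2 := by
        rw [mul_pow, mul_pow, Real.sq_sqrt hA0.le, Real.sq_sqrt hB0.le]; linarith
      rw [← Real.sqrt_sq (by positivity : (0:ℝ) ≤ Real.sqrt A * ‖c‖), hsq,
        Real.sqrt_sq (by positivity : (0:ℝ) ≤ Real.sqrt B * ‖d‖)]
    have hznorm : ‖z‖ = A * ‖c‖ ^ 2 / 2 := by
      have hn : ‖z‖ = ‖c‖ * ‖p‖ * ‖d‖ := by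
        rw [hz, norm_mul, norm_mul, norm_star]
      rw [hn, hp]
      have expand : ‖c‖ * (1 / 2 * (Real.sqrt A * Real.sqrt B)) * ‖d‖
          = 1 / 2 * ((Real.sqrt A * ‖c‖) * (Real.sqrt B * ‖d‖)) := by ring
      rw [expand, ← hkey]
      linear_combination ‖c‖ ^ 2 / 2 * hAA
    have hzz : z = ((-(A * ‖c‖ ^ 2 / 2) : ℝ) : ℍ) := by
      have hre : z.re = -‖z‖ := by rw [hzre, hznorm]
      have := re_eq_neg_norm hre
      rwa [hzre] at this
    have hG : star c * p * (d₀ * c) = ((-(A * ‖c‖ ^ 2 / 2) : ℝ) : ℍ) := by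
      rw [hd0, neg_mul, smul_mul_assoc, mul_neg, mul_smul_comm, ← mul_assoc, mul_assoc (star c),
        hps, Quaternion.mul_coe_eq_smul, smul_mul_assoc, star_mul_self', Quaternion.smul_coe,
        Quaternion.smul_coe, ← Quaternion.coe_neg]
      congr 1; field_simp; ring
    have hd_eq : d = d₀ * c := by
      have hcz : star c ≠ 0 := star_ne_zero.mpr hc0
      have heq : star c * (p * d) = star c * (p * (d₀ * c)) := by
        rw [← mul_assoc, ← mul_assoc, ← hz, hzz, hG]
      have heq2 : p * d = p * (d₀ * c) := mul_left_cancel₀ hcz heq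
      exact mul_left_cancel₀ hpne heq2
    have hu'u : u' = fun i => u i * c := by
      rw [hcd, hd_eq, hu]
      funext i
      simp only [Pi.add_apply]
      rw [add_mul, mul_assoc]
    ext x
    constructor
    · rintro ⟨e, rfl⟩
      exact ⟨c * e, by funext i; rw [hu'u]; simp [mul_assoc]⟩
    · rintro ⟨e, rfl⟩
      refine ⟨c⁻¹ * e, ?_⟩
      funext i
      rw [hu'u]
      simp only
      rw [mul_assoc, mul_inv_cancel_left₀ hc0]
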